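/- arXiv:1412.0783 — 5 statements merged into one kernel-verified Lean document; each statement's English description precedes it below -/
import Mathlib

section
/- Variance formula for digitally shifted digital nets: for a subgroup P of a finite abelian group G and F : G → ℝ, the variance over uniform random shift σ ∈ G of the estimator I_{P+σ}(F) equals ∑_{h ∈ P^⊥ \ {0}} |F̂(h)|², i.e. |G|^{-1} ∑_{σ∈G} (I_{P+σ}(F) − I(F))² = ∑_{h ∈ P^⊥, h ≠ trivial} |F̂(h)|². -/
open scoped Classical

open Finset in
private lemma sum_char_over_P' {G : Type*} [AddCommGroup G] [Fintype G]
    (P : AddSubgroup G) (h : AddChar G ℂ) :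
    ∑ p ∈ univ.filter (· ∈ P), h p
      = if (∀ g ∈ P, h g = 1) then ((univ.filter (· ∈ P)).card : ℂ) else 0 := by
  classical
  have hs : ∑ p ∈ univ.filter (· ∈ P), h p = ∑ x : P, h x := by
    rw [Finset.sum_subtype (p := fun x => x ∈ P) (univ.filter (· ∈ P)) (by simp) (fun x => h x)]
  have hs2 : ∑ x : P, h x = ∑ x : P, (h.compAddMonoidHom P.subtype) x := rfl
  rw [hs, hs2, AddChar.sum_eq_ite]
  have hcard : (Fintype.card P : ℂ) = ((univ.filter (· ∈ P)).card : ℂ) := by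
    norm_cast
    simpa using Fintype.card_subtype (· ∈ P)
  have hcond : (h.compAddMonoidHom P.subtype = 0) ↔ (∀ g ∈ P, h g = 1) := by
    constructor
    · intro h0 g hg
      have := DFunLike.congr_fun h0 ⟨g, hg⟩
      simpa using this
    · intro hall
      ext x
      simpa using hall x x.2
  split_ifs with h1 h2 h2
  · exact hcard
  · exact absurd (hcond.1 h1) h2
  · exact absurd (hcond.2 h2) h1
  · rfl

open Finset in
private lemma sum_annihilator' {G : Type*} [AddCommGroup G] [Fintype G]
    (P : AddSubgroup G) (z : G) :
    ∑ h ∈ univ.filter (fun h : AddChar G ℂ => ∀ g ∈ P, h g = 1), h z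
      = if z ∈ P then (Fintype.card G : ℂ) / ((univ.filter (· ∈ P)).card : ℂ) else 0 := by
  classical
  have hMne : ((univ.filter (· ∈ P)).card : ℂ) ≠ 0 := by
    have h0 : (0:G) ∈ univ.filter (· ∈ P) := by simp [P.zero_mem]
    exact Nat.cast_ne_zero.2 (Finset.card_ne_zero_of_mem h0)
  have key : (∑ h ∈ univ.filter (fun h : AddChar G ℂ => ∀ g ∈ P, h g = 1), h z)
      * ((univ.filter (· ∈ P)).card : ℂ)
      = if z ∈ P then (Fintype.card G : ℂ) else 0 := by
    have e1 : ∑ h : AddChar G ℂ, (∑ p ∈ univ.filter (· ∈ P), h p) * h z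
        = (∑ h ∈ univ.filter (fun h : AddChar G ℂ => ∀ g ∈ P, h g = 1), h z)
            * ((univ.filter (· ∈ P)).card : ℂ) := by
      rw [Finset.sum_mul, Finset.sum_filter]
      refine Fintype.sum_congr _ _ fun h => ?_
      rw [sum_char_over_P' P h]
      split_ifs <;> ring
    have e2 : ∑ h : AddChar G ℂ, (∑ p ∈ univ.filter (· ∈ P), h p) * h z
        = if z ∈ P then (Fintype.card G : ℂ) else 0 := by
      calc ∑ h : AddChar G ℂ, (∑ p ∈ univ.filter (· ∈ P), h p) * h z
          = ∑ h : AddChar G ℂ, ∑ p ∈ univ.filter (· ∈ P), h (p + z) := by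
            refine Fintype.sum_congr _ _ fun h => ?_
            rw [Finset.sum_mul]
            exact Finset.sum_congr rfl fun p _ => (AddChar.map_add_eq_mul h p z).symm
        _ = ∑ p ∈ univ.filter (· ∈ P), ∑ h : AddChar G ℂ, h (p + z) := Finset.sum_comm
        _ = ∑ p ∈ univ.filter (· ∈ P), if p = -z then (Fintype.card G : ℂ) else 0 := by
            refine Finset.sum_congr rfl fun p _ => ?_
            rw [AddChar.sum_apply_eq_ite]
            congr 1
            simp [eq_neg_iff_add_eq_zero, eq_comm]
        _ = if -z ∈ univ.filter (· ∈ P) then (Fintype.card G : ℂ) else 0 :=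
            Finset.sum_ite_eq' _ _ _
        _ = if z ∈ P then (Fintype.card G : ℂ) else 0 := by
            simp [neg_mem_iff]
    rw [← e1, e2]
  split_ifs with hz
  · rw [eq_div_iff hMne]
    simpa [if_pos hz] using key
  · rw [if_neg hz] at key
    exact (mul_eq_zero.1 key).resolve_right hMne

/-- Variance formula over digital shifts: the mean square QMC error equals the sum
of the squared absolute values of the nontrivial discrete Fourier coefficients
supported on `P^⊥`. -/
theorem variance_digital_shift {G : Type*} [AddCommGroup G] [Fintype G]
    [Fintype (AddChar G ℂ)] (P : AddSubgroup G) (F : G → ℝ) :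
    (1 / (Fintype.card G : ℝ)) *
        ∑ σ : G,
          ((1 / ((Finset.univ.filter (· ∈ P)).card : ℝ)) *
              (∑ g ∈ Finset.univ.filter (· ∈ P), F (g + σ)) -
            (1 / (Fintype.card G : ℝ)) * ∑ g : G, F g) ^ 2
      = ∑ h ∈ Finset.univ.filter
            (fun h : AddChar G ℂ => (∀ g ∈ P, h g = 1) ∧ h ≠ 1),
          ‖(1 / (Fintype.card G : ℂ)) * ∑ g : G, (F g : ℂ) * h g‖ ^ 2 := by
  classical
  obtain rfl : ‹Fintype (AddChar G ℂ)› = AddChar.instFintype G ℂ := Subsingleton.elim _ _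
  open Finset in
  set Pf : Finset G := univ.filter (· ∈ P) with hPf
  have hNnat : (Fintype.card G) ≠ 0 := Fintype.card_ne_zero
  have hMnat : Pf.card ≠ 0 := by
    have h0 : (0:G) ∈ Pf := by simp [hPf, P.zero_mem]
    exact Finset.card_ne_zero_of_mem h0
  have hN : ((Fintype.card G : ℝ)) ≠ 0 := Nat.cast_ne_zero.2 hNnat
  have hM : ((Pf.card : ℝ)) ≠ 0 := Nat.cast_ne_zero.2 hMnat
  have hNC : ((Fintype.card G : ℂ)) ≠ 0 := Nat.cast_ne_zero.2 hNnat
  have hMC : ((Pf.card : ℂ)) ≠ 0 := Nat.cast_ne_zero.2 hMnat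
  set N : ℝ := (Fintype.card G : ℝ) with hNdef
  set M : ℝ := (Pf.card : ℝ) with hMdef
  set T : ℝ := ∑ r ∈ Pf, ∑ x : G, F x * F (x + r) with hT
  set c : ℝ := (1 / N) * ∑ g : G, F g with hc
  -- ### LHS
  have hshift : ∀ p : G, ∑ σ : G, F (p + σ) = ∑ g : G, F g := fun p =>
    Fintype.sum_equiv (Equiv.addLeft p) _ _ fun σ => rfl
  have hsum1 : ∑ σ : G, (∑ p ∈ Pf, F (p + σ)) = M * ∑ g : G, F g := by
    rw [Finset.sum_comm, Finset.sum_congr rfl (fun p _ => hshift p), Finset.sum_const,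
      nsmul_eq_mul]
  have hsub_reindex : ∀ p ∈ Pf, ∀ f : G → ℝ,
      ∑ q ∈ Pf, f (q - p) = ∑ r ∈ Pf, f r := by
    intro p hp f
    have hpP : p ∈ P := by simpa [hPf] using hp
    refine Finset.sum_nbij' (i := fun q => q - p) (j := fun r => r + p) ?_ ?_ ?_ ?_ ?_
    · intro q hq; simp only [hPf, mem_filter, mem_univ, true_and] at hq ⊢
      exact P.sub_mem hq hpP
    · intro r hr; simp only [hPf, mem_filter, mem_univ, true_and] at hr ⊢
      exact P.add_mem hr hpP
    · intro q _; abel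
    · intro r _; abel
    · intro q _; rfl
  have hsum2 : ∑ σ : G, (∑ p ∈ Pf, F (p + σ))^2 = M * T := by
    have expand : ∀ σ : G, (∑ p ∈ Pf, F (p + σ))^2
        = ∑ p ∈ Pf, ∑ q ∈ Pf, F (p + σ) * F (q + σ) := by
      intro σ; rw [sq, Finset.sum_mul_sum]
    rw [Finset.sum_congr rfl fun σ _ => expand σ]
    rw [Finset.sum_comm]
    have hswap : ∀ p ∈ Pf, ∑ σ : G, ∑ q ∈ Pf, F (p + σ) * F (q + σ)
        = ∑ q ∈ Pf, ∑ σ : G, F (p + σ) * F (q + σ) := fun p _ => Finset.sum_comm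
    rw [Finset.sum_congr rfl hswap]
    have hinner : ∀ p q : G, ∑ σ : G, F (p + σ) * F (q + σ)
        = ∑ x : G, F x * F (x + (q - p)) := by
      intro p q
      refine Fintype.sum_equiv (Equiv.addLeft p) _ _ fun σ => ?_
      have hq : q + σ = (p + σ) + (q - p) := by abel
      rw [hq]; rfl
    calc ∑ p ∈ Pf, ∑ q ∈ Pf, ∑ σ : G, F (p + σ) * F (q + σ)
        = ∑ p ∈ Pf, ∑ q ∈ Pf, ∑ x : G, F x * F (x + (q - p)) :=
          Finset.sum_congr rfl fun p _ => Finset.sum_congr rfl fun q _ => hinner p q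
      _ = ∑ p ∈ Pf, ∑ r ∈ Pf, ∑ x : G, F x * F (x + r) :=
          Finset.sum_congr rfl fun p hp =>
            hsub_reindex p hp (fun r => ∑ x : G, F x * F (x + r))
      _ = M * T := by rw [Finset.sum_const, nsmul_eq_mul]
  have hLHS : (1 / N) * ∑ σ : G,
      ((1 / M) * (∑ p ∈ Pf, F (p + σ)) - c) ^ 2 = T / (N * M) - c^2 := by
    have hexp : ∑ σ : G, ((1 / M) * (∑ p ∈ Pf, F (p + σ)) - c) ^ 2
        = (1/M)^2 * (∑ σ : G, (∑ p ∈ Pf, F (p + σ))^2)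
          - 2*c*(1/M) * (∑ σ : G, (∑ p ∈ Pf, F (p + σ)))
          + N * c^2 := by
      rw [Finset.sum_congr rfl (fun σ _ =>
        (by ring : ((1 / M) * (∑ p ∈ Pf, F (p + σ)) - c) ^ 2
          = (1/M)^2 * (∑ p ∈ Pf, F (p + σ))^2
            - 2*c*(1/M) * (∑ p ∈ Pf, F (p + σ)) + c^2))]
      rw [Finset.sum_add_distrib, Finset.sum_sub_distrib, ← Finset.mul_sum, ← Finset.mul_sum,
        Finset.sum_const, Finset.card_univ, nsmul_eq_mul]
    rw [hexp, hsum1, hsum2]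
    have hF : ∑ g : G, F g = N * c := by rw [hc]; field_simp
    rw [hF]
    field_simp
    ring
  -- ### RHS
  set Fh : AddChar G ℂ → ℂ :=
    fun h => (1 / (Fintype.card G : ℂ)) * ∑ g : G, (F g : ℂ) * h g with hFh
  set K : Finset (AddChar G ℂ) := univ.filter (fun h : AddChar G ℂ => ∀ g ∈ P, h g = 1)
    with hK
  have hKfilter : univ.filter (fun h : AddChar G ℂ => (∀ g ∈ P, h g = 1) ∧ h ≠ 1)
      = K.erase 1 := by
    ext h; simp [hK, Finset.mem_erase, and_comm]
  have h1K : (1 : AddChar G ℂ) ∈ K := by simp [hK]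
  have hsplit : ∑ h ∈ univ.filter (fun h : AddChar G ℂ => (∀ g ∈ P, h g = 1) ∧ h ≠ 1),
      ‖Fh h‖ ^ 2 = (∑ h ∈ K, ‖Fh h‖ ^ 2) - ‖Fh 1‖ ^ 2 := by
    rw [hKfilter]
    exact eq_sub_of_add_eq (Finset.sum_erase_add K _ h1K)
  have hf1 : ‖Fh 1‖ ^ 2 = c^2 := by
    have : Fh 1 = ((c : ℝ) : ℂ) := by
      rw [hFh, hc, hNdef]
      push_cast
      simp
    rw [this, Complex.sq_norm, Complex.normSq_ofReal, sq]
  have habs : ∀ z : ℂ, ‖z‖ ^ 2 = (z * (starRingEnd ℂ) z).re := fun z => by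
    rw [Complex.sq_norm, Complex.mul_conj]; simp
  have hKsum : ∑ h ∈ K, ‖Fh h‖ ^ 2 = T / (N * M) := by
    have hre : ∑ h ∈ K, ‖Fh h‖ ^ 2
        = (∑ h ∈ K, Fh h * (starRingEnd ℂ) (Fh h)).re := by
      rw [Complex.re_sum]
      exact Finset.sum_congr rfl fun h _ => habs (Fh h)
    have hterm : ∀ h : AddChar G ℂ, Fh h * (starRingEnd ℂ) (Fh h)
        = (1 / (Fintype.card G : ℂ))^2
            * ∑ x : G, ∑ y : G, ((F x : ℂ) * (F y : ℂ)) * h (x - y) := by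
      intro h
      have hconj : (starRingEnd ℂ) (Fh h)
          = (1 / (Fintype.card G : ℂ)) * ∑ y : G, (F y : ℂ) * h (-y) := by
        rw [hFh]
        rw [map_mul, map_sum]
        congr 1
        · simp
        · exact Finset.sum_congr rfl fun y _ => by
            rw [map_mul, Complex.conj_ofReal, AddChar.map_neg_eq_conj]
      rw [hconj, hFh]
      rw [mul_mul_mul_comm, ← sq, Finset.sum_mul_sum]
      congr 1
      refine Finset.sum_congr rfl fun x _ => Finset.sum_congr rfl fun y _ => ?_
      rw [mul_mul_mul_comm, ← AddChar.map_add_eq_mul, sub_eq_add_neg]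
    have hc2 : ∑ h ∈ K, Fh h * (starRingEnd ℂ) (Fh h)
        = ((T / (N * M) : ℝ) : ℂ) := by
      rw [Finset.sum_congr rfl fun h _ => hterm h]
      rw [← Finset.mul_sum]
      have swap1 : ∑ h ∈ K, ∑ x : G, ∑ y : G, ((F x : ℂ) * (F y : ℂ)) * h (x - y)
          = ∑ x : G, ∑ y : G, ((F x : ℂ) * (F y : ℂ)) * ∑ h ∈ K, h (x - y) := by
        rw [Finset.sum_comm]
        refine Finset.sum_congr rfl fun x _ => ?_
        rw [Finset.sum_comm]
        refine Finset.sum_congr rfl fun y _ => ?_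
        rw [Finset.mul_sum]
      rw [swap1]
      have happ : ∀ x y : G, ((F x : ℂ) * (F y : ℂ)) * ∑ h ∈ K, h (x - y)
          = if x - y ∈ P
            then ((F x : ℂ) * (F y : ℂ)) * ((Fintype.card G : ℂ) / (Pf.card : ℂ)) else 0 := by
        intro x y
        rw [hK, sum_annihilator' P (x - y)]
        split_ifs <;> simp [hPf]
      rw [Finset.sum_congr rfl fun x _ => Finset.sum_congr rfl fun y _ => happ x y]
      have hyre : ∀ x : G, (∑ y : G, if x - y ∈ P
            then ((F x : ℂ) * (F y : ℂ)) * ((Fintype.card G : ℂ) / (Pf.card : ℂ)) else 0)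
          = ∑ r ∈ Pf, ((F x : ℂ) * (F (x - r) : ℂ))
              * ((Fintype.card G : ℂ) / (Pf.card : ℂ)) := by
        intro x
        rw [← Finset.sum_filter]
        refine Finset.sum_nbij' (i := fun y => x - y) (j := fun r => x - r) ?_ ?_ ?_ ?_ ?_
        · intro y hy; simp only [hPf, mem_filter, mem_univ, true_and] at hy ⊢; exact hy
        · intro r hr; simp only [hPf, mem_filter, mem_univ, true_and] at hr ⊢
          simpa [sub_sub_cancel] using hr
        · intro y _; abel
        · intro r _; abel
        · intro y _; rw [sub_sub_cancel]
      rw [Finset.sum_congr rfl fun x _ => hyre x]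
      have hUT : ∑ x : G, ∑ r ∈ Pf, F x * F (x - r) = T := by
        rw [hT, Finset.sum_comm]
        refine Finset.sum_congr rfl fun r _ => ?_
        refine Fintype.sum_equiv (Equiv.subRight r) _ _ fun x => ?_
        simp [mul_comm]
      have hcollect : ∑ x : G, ∑ r ∈ Pf, ((F x : ℂ) * (F (x - r) : ℂ))
            * ((Fintype.card G : ℂ) / (Pf.card : ℂ))
          = ((T : ℝ) : ℂ) * ((Fintype.card G : ℂ) / (Pf.card : ℂ)) := by
        rw [← hUT]
        push_cast
        rw [Finset.sum_mul]
        refine Finset.sum_congr rfl fun x _ => ?_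
        rw [Finset.sum_mul]
      rw [hcollect]
      rw [hNdef, hMdef]
      push_cast
      field_simp
    rw [hre, hc2, Complex.ofReal_re]
  rw [hLHS, hsplit, hKsum, hf1]
end

section
/- Koksma–Hlawka type inequality for the root mean square error: if P ⊆ ℤ_b^{s×n} is a subgroup and F : ℤ_b^{s×n} → ℝ satisfies |F̂(A)| ≤ C · b^{−μ(A)} for all A ∈ ℤ_b^{s×n}, then sqrt(Var_{σ}[I_{P+σ}(F)]) ≤ C · W(P;μ), where W(P;μ) = sqrt(∑_{A ∈ P^⊥\{0}} b^{−2μ(A)}). -/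
open scoped Classical

namespace KHaux

set_option linter.unusedSectionVars false

variable (b s n : ℕ) [NeZero b]

noncomputable def ω : ℂ := Complex.exp (2 * Real.pi * Complex.I / b)

lemma hωprim : IsPrimitiveRoot (ω b) b := Complex.isPrimitiveRoot_exp b (NeZero.ne b)

lemma hω : ω b ^ b = 1 := (hωprim b).pow_eq_one

noncomputable def ψ : AddChar (ZMod b) ℂ := AddChar.zmodChar b (hω b)

lemma ψ_nat (k : ℕ) : ψ b (k : ZMod b) = ω b ^ k := AddChar.zmodChar_apply' _ k

lemma ψ_eq_one_iff (x : ZMod b) : ψ b x = 1 ↔ x = 0 := by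
  constructor
  · intro h
    rw [ψ, AddChar.zmodChar_apply] at h
    have := ((hωprim b).pow_eq_one_iff_dvd x.val).mp h
    have hlt : x.val < b := ZMod.val_lt x
    have h0 : x.val = 0 := Nat.eq_zero_of_dvd_of_lt this hlt
    exact (ZMod.val_eq_zero x).mp h0
  · rintro rfl; simp [ψ]


abbrev G := Matrix (Fin s) (Fin n) (ZMod b)

def pairHom (A : G b s n) : G b s n →+ ZMod b where
  toFun B := ∑ i, ∑ j, A i j * B i j
  map_zero' := by simp
  map_add' := by
    intro x y
    simp [Matrix.add_apply, mul_add, Finset.sum_add_distrib]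

lemma pairHom_apply (A B : G b s n) : pairHom b s n A B = ∑ i, ∑ j, A i j * B i j := rfl

lemma pairHom_comm (A B : G b s n) : pairHom b s n A B = pairHom b s n B A := by
  simp [pairHom_apply, mul_comm]

noncomputable def χ (A : G b s n) : AddChar (G b s n) ℂ :=
  (ψ b).compAddMonoidHom (pairHom b s n A)

lemma χ_apply (A B : G b s n) : χ b s n A B = ψ b (∑ i, ∑ j, A i j * B i j) := rfl

/-- The expression occurring in the theorem statement equals `χ A B`. -/
lemma omega_pow_eq (A B : G b s n) :
    Complex.exp (2 * Real.pi * Complex.I / b) ^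
      (∑ i : Fin s, ∑ j : Fin n, (A i j).val * (B i j).val) = χ b s n A B := by
  rw [show Complex.exp (2 * Real.pi * Complex.I / b) = ω b from rfl, χ_apply, ← ψ_nat]
  congr 1
  push_cast
  simp [ZMod.natCast_val, ZMod.cast_id]

lemma χ_comm (A B : G b s n) : χ b s n A B = χ b s n B A := by
  rw [χ_apply, χ_apply]
  congr 1
  exact pairHom_comm b s n A B

lemma χ_eq_zero_iff (A : G b s n) : χ b s n A = 0 ↔ A = 0 := by
  constructor
  · intro h
    rw [AddChar.eq_zero_iff] at h
    ext i j
    have := h (Matrix.single i j 1)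
    rw [χ_apply, ψ_eq_one_iff] at this
    rw [Matrix.zero_apply]
    rw [Finset.sum_eq_single i (fun i' _ hi' => Finset.sum_eq_zero fun j' _ => by
        simp [Matrix.single, Ne.symm hi'])
      (by simp)] at this
    rw [Finset.sum_eq_single j (fun j' _ hj' => by
        simp [Matrix.single, Ne.symm hj'])
      (by simp)] at this
    simpa [Matrix.single] using this
  · rintro rfl
    rw [AddChar.eq_zero_iff]
    intro x
    rw [χ_apply]
    simp

lemma sum_χ (A : G b s n) :
    ∑ B : G b s n, χ b s n A B =
      if A = 0 then (Fintype.card (G b s n) : ℂ) else 0 := by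
  rw [AddChar.sum_eq_ite]
  simp [χ_eq_zero_iff]


noncomputable def hatF (F : G b s n → ℝ) (A : G b s n) : ℂ :=
  (1 / (Fintype.card (G b s n) : ℂ)) * ∑ B, (F B : ℂ) * χ b s n A B

lemma card_ne_zero' : (Fintype.card (G b s n) : ℂ) ≠ 0 := by
  exact_mod_cast Fintype.card_ne_zero

lemma inversion (F : G b s n → ℝ) (x : G b s n) :
    ∑ A : G b s n, hatF b s n F A * χ b s n A (-x) = (F x : ℂ) := by
  have key : ∀ A : G b s n, hatF b s n F A * χ b s n A (-x)
      = (1 / (Fintype.card (G b s n) : ℂ)) * ∑ B, (F B : ℂ) * χ b s n (B - x) A := by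
    intro A
    rw [hatF, mul_assoc, Finset.sum_mul]
    congr 1
    refine Finset.sum_congr rfl fun B _ => ?_
    rw [mul_assoc, ← AddChar.map_add_eq_mul, ← sub_eq_add_neg, χ_comm]
  rw [Finset.sum_congr rfl (fun A _ => key A), ← Finset.mul_sum, Finset.sum_comm]
  have : ∀ B : G b s n, ∑ A : G b s n, (F B : ℂ) * χ b s n (B - x) A
      = (F B : ℂ) * (if B - x = 0 then (Fintype.card (G b s n) : ℂ) else 0) := by
    intro B
    rw [← Finset.mul_sum, sum_χ]
  rw [Finset.sum_congr rfl (fun B _ => this B)]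
  rw [Finset.sum_eq_single x (fun B _ hB => by
      rw [if_neg (fun h => hB (sub_eq_zero.mp h)), mul_zero]) (by simp)]
  rw [sub_self, if_pos rfl]
  field_simp

lemma sum_χ_subgroup (P : AddSubgroup (G b s n)) (A : G b s n) :
    ∑ B ∈ Finset.univ.filter (· ∈ P), χ b s n A B =
      if (∀ B ∈ P, χ b s n A B = 1) then ((Finset.univ.filter (· ∈ P)).card : ℂ) else 0 := by
  have hsum : ∑ B ∈ Finset.univ.filter (· ∈ P), χ b s n A B
      = ∑ B : P, ((χ b s n A).compAddMonoidHom P.subtype) B := by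
    rw [Finset.sum_subtype (p := (· ∈ P)) (Finset.univ.filter (· ∈ P)) (by simp)
      (fun B => χ b s n A B)]
    rfl
  rw [hsum, AddChar.sum_eq_ite]
  have hcard : (Fintype.card P : ℂ) = ((Finset.univ.filter (· ∈ P)).card : ℂ) := by
    norm_cast
    rw [Fintype.card_eq_nat_card, Nat.card_eq_fintype_card, Fintype.card_subtype]
  have hiff : ((χ b s n A).compAddMonoidHom P.subtype = 0) ↔ (∀ B ∈ P, χ b s n A B = 1) := by
    rw [AddChar.eq_zero_iff]
    constructor
    · intro h B hB; exact h ⟨B, hB⟩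
    · intro h x; exact h x x.2
  split_ifs with h1 h2 h2
  · exact hcard
  · exact absurd (hiff.mp h1) h2
  · exact absurd (hiff.mpr h2) h1
  · rfl

lemma conj_χ (A x : G b s n) :
    (starRingEnd ℂ) (χ b s n A x) = χ b s n A (-x) := by
  have hconjω : (starRingEnd ℂ) (ω b) = (ω b)⁻¹ := by
    rw [ω, ← Complex.exp_conj, ← Complex.exp_neg]
    congr 1
    simp only [map_div₀, map_mul, Complex.conj_I, Complex.conj_ofReal, map_natCast,
      map_ofNat]
    ring
  rw [AddChar.map_neg_eq_inv, χ_apply, ψ, AddChar.zmodChar_apply, map_pow, hconjω, inv_pow]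


lemma χ_zero_left (B : G b s n) : χ b s n 0 B = 1 := by
  rw [χ_apply]
  simp

lemma pairHom_sub (A A' B : G b s n) :
    pairHom b s n (A - A') B = pairHom b s n A B - pairHom b s n A' B := by
  simp [pairHom_apply, Matrix.sub_apply, sub_mul, Finset.sum_sub_distrib]

lemma sum_cross (A A' : G b s n) :
    ∑ σ : G b s n, χ b s n A (-σ) * (starRingEnd ℂ) (χ b s n A' (-σ)) =
      if A = A' then (Fintype.card (G b s n) : ℂ) else 0 := by
  have h1 : ∀ σ : G b s n, χ b s n A (-σ) * (starRingEnd ℂ) (χ b s n A' (-σ))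
      = χ b s n (A' - A) σ := by
    intro σ
    rw [conj_χ, neg_neg, χ, χ, χ, AddChar.compAddMonoidHom_apply,
      AddChar.compAddMonoidHom_apply, AddChar.compAddMonoidHom_apply,
      ← AddChar.map_add_eq_mul, pairHom_sub]
    congr 1
    rw [(pairHom b s n A).map_neg]
    ring
  rw [Finset.sum_congr rfl fun σ _ => h1 σ, sum_χ]
  by_cases h : A = A'
  · rw [if_pos (by rw [h, sub_self]), if_pos h]
  · rw [if_neg (fun hc => h (sub_eq_zero.mp hc).symm), if_neg h]

lemma parseval (D : Finset (G b s n)) (c : G b s n → ℂ) :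
    ∑ σ : G b s n, ((∑ A ∈ D, c A * χ b s n A (-σ)) *
        (starRingEnd ℂ) (∑ A ∈ D, c A * χ b s n A (-σ))) =
      (Fintype.card (G b s n) : ℂ) * ∑ A ∈ D, c A * (starRingEnd ℂ) (c A) := by
  have expand : ∀ σ : G b s n, ((∑ A ∈ D, c A * χ b s n A (-σ)) *
      (starRingEnd ℂ) (∑ A ∈ D, c A * χ b s n A (-σ)))
      = ∑ A ∈ D, ∑ A' ∈ D, (c A * (starRingEnd ℂ) (c A')) *
          (χ b s n A (-σ) * (starRingEnd ℂ) (χ b s n A' (-σ)))  := by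
    intro σ
    rw [map_sum, Finset.sum_mul_sum]
    refine Finset.sum_congr rfl fun A _ => Finset.sum_congr rfl fun A' _ => ?_
    rw [map_mul]
    ring
  rw [Finset.sum_congr rfl fun σ _ => expand σ, Finset.sum_comm]
  have inner : ∀ A ∈ D, (∑ σ : G b s n, ∑ A' ∈ D, (c A * (starRingEnd ℂ) (c A')) *
      (χ b s n A (-σ) * (starRingEnd ℂ) (χ b s n A' (-σ))))
      = (Fintype.card (G b s n) : ℂ) * (c A * (starRingEnd ℂ) (c A)) := by
    intro A hA
    rw [Finset.sum_comm]
    have inner2 : ∀ A' ∈ D, (∑ σ : G b s n, (c A * (starRingEnd ℂ) (c A')) *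
        (χ b s n A (-σ) * (starRingEnd ℂ) (χ b s n A' (-σ))))
        = (c A * (starRingEnd ℂ) (c A')) *
            (if A = A' then (Fintype.card (G b s n) : ℂ) else 0) := by
      intro A' _
      rw [← Finset.mul_sum, sum_cross]
    rw [Finset.sum_congr rfl inner2,
      Finset.sum_eq_single_of_mem A hA (fun A' _ hA' => by
        rw [if_neg (fun h => hA' h.symm), mul_zero]),
      if_pos rfl]
    ring
  rw [Finset.sum_congr rfl inner, ← Finset.mul_sum]


lemma Pc_ne_zero (P : AddSubgroup (G b s n)) :
    ((Finset.univ.filter (· ∈ P)).card : ℂ) ≠ 0 := by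
  have : (0 : G b s n) ∈ Finset.univ.filter (· ∈ P) := by simp [P.zero_mem]
  have h : 0 < (Finset.univ.filter (· ∈ P)).card := Finset.card_pos.mpr ⟨0, this⟩
  exact_mod_cast h.ne'

lemma step1 (P : AddSubgroup (G b s n)) (F : G b s n → ℝ) (σ : G b s n) :
    (1 / ((Finset.univ.filter (· ∈ P)).card : ℂ)) *
        ∑ B ∈ Finset.univ.filter (· ∈ P), (F (B + σ) : ℂ) =
      ∑ A ∈ Finset.univ.filter (fun A => ∀ B ∈ P, χ b s n A B = 1),
        hatF b s n F A * χ b s n A (-σ) := by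
  have h1 : ∀ B ∈ Finset.univ.filter (· ∈ P), (F (B + σ) : ℂ)
      = ∑ A : G b s n, (hatF b s n F A * χ b s n A (-σ)) * χ b s n A (-B) := by
    intro B _
    rw [← inversion b s n F (B + σ)]
    refine Finset.sum_congr rfl fun A _ => ?_
    rw [mul_assoc, ← AddChar.map_add_eq_mul, neg_add, add_comm]
  rw [Finset.sum_congr rfl h1, Finset.sum_comm]
  have h2 : ∀ A : G b s n, ∑ B ∈ Finset.univ.filter (· ∈ P),
        (hatF b s n F A * χ b s n A (-σ)) * χ b s n A (-B)
      = (hatF b s n F A * χ b s n A (-σ)) *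
          (if (∀ B ∈ P, χ b s n A B = 1)
            then (((Finset.univ.filter (· ∈ P)).card : ℂ)) else 0) := by
    intro A
    rw [← Finset.mul_sum]
    congr 1
    rw [← sum_χ_subgroup]
    refine Finset.sum_equiv (Equiv.neg (G b s n)) (fun i => ?_) (fun i _ => rfl)
    simp [P.neg_mem_iff]
  rw [Finset.sum_congr rfl fun A _ => h2 A, Finset.mul_sum, Finset.sum_filter]
  refine Finset.sum_congr rfl fun A _ => ?_
  split_ifs with h
  · rw [mul_comm (1 / _), mul_assoc, one_div, mul_inv_cancel₀ (Pc_ne_zero b s n P), mul_one]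
  · rw [mul_zero, mul_zero]

lemma step2 (P : AddSubgroup (G b s n)) (F : G b s n → ℝ) (σ : G b s n) :
    (((1 / ((Finset.univ.filter (· ∈ P)).card : ℝ)) *
          (∑ B ∈ Finset.univ.filter (· ∈ P), F (B + σ)) -
        (1 / (Fintype.card (G b s n) : ℝ)) * ∑ B : G b s n, F B : ℝ) : ℂ) =
      ∑ A ∈ Finset.univ.filter (fun A => (∀ B ∈ P, χ b s n A B = 1) ∧ A ≠ 0),
        hatF b s n F A * χ b s n A (-σ) := by
  have hD : Finset.univ.filter (fun A : G b s n => (∀ B ∈ P, χ b s n A B = 1) ∧ A ≠ 0)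
      = (Finset.univ.filter (fun A : G b s n => ∀ B ∈ P, χ b s n A B = 1)).erase 0 := by
    ext A
    simp only [Finset.mem_erase, Finset.mem_filter, Finset.mem_univ, true_and]
    tauto
  have h0T : (0 : G b s n) ∈ Finset.univ.filter
      (fun A : G b s n => ∀ B ∈ P, χ b s n A B = 1) := by
    simp only [Finset.mem_filter, Finset.mem_univ, true_and]
    exact fun B _ => χ_zero_left b s n B
  have hsplit := Finset.add_sum_erase _
    (fun A => hatF b s n F A * χ b s n A (-σ)) h0T
  have hhat0 : hatF b s n F 0 * χ b s n 0 (-σ)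
      = (1 / (Fintype.card (G b s n) : ℂ)) * ∑ B : G b s n, (F B : ℂ) := by
    rw [χ_zero_left, mul_one, hatF]
    congr 1
    exact Finset.sum_congr rfl fun B _ => by rw [χ_zero_left, mul_one]
  push_cast
  rw [step1, hD, ← hsplit]
  beta_reduce
  rw [hhat0]
  ring

lemma variance (P : AddSubgroup (G b s n)) (F : G b s n → ℝ) :
    ∑ σ : G b s n,
        ((1 / ((Finset.univ.filter (· ∈ P)).card : ℝ)) *
            (∑ B ∈ Finset.univ.filter (· ∈ P), F (B + σ)) -
          (1 / (Fintype.card (G b s n) : ℝ)) * ∑ B : G b s n, F B) ^ 2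
      = (Fintype.card (G b s n) : ℝ) *
          ∑ A ∈ Finset.univ.filter (fun A => (∀ B ∈ P, χ b s n A B = 1) ∧ A ≠ 0),
            Complex.normSq (hatF b s n F A) := by
  have key := parseval b s n
    (Finset.univ.filter (fun A => (∀ B ∈ P, χ b s n A B = 1) ∧ A ≠ 0))
    (hatF b s n F)
  have lhs_eq : ∀ σ : G b s n,
      ((∑ A ∈ Finset.univ.filter (fun A => (∀ B ∈ P, χ b s n A B = 1) ∧ A ≠ 0),
          hatF b s n F A * χ b s n A (-σ)) *
        (starRingEnd ℂ) (∑ A ∈ Finset.univ.filter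
            (fun A => (∀ B ∈ P, χ b s n A B = 1) ∧ A ≠ 0),
          hatF b s n F A * χ b s n A (-σ)))
      = (((1 / ((Finset.univ.filter (· ∈ P)).card : ℝ)) *
            (∑ B ∈ Finset.univ.filter (· ∈ P), F (B + σ)) -
          (1 / (Fintype.card (G b s n) : ℝ)) * ∑ B : G b s n, F B) ^ 2 : ℝ) := by
    intro σ
    rw [← step2, Complex.mul_conj]
    norm_cast
    rw [Complex.normSq_ofReal]
    ring
  rw [Finset.sum_congr rfl fun σ _ => lhs_eq σ] at key
  have conj_eq : ∀ A : G b s n, hatF b s n F A * (starRingEnd ℂ) (hatF b s n F A)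
      = (Complex.normSq (hatF b s n F A) : ℂ) := fun A => Complex.mul_conj _
  rw [Finset.sum_congr rfl fun A _ => conj_eq A] at key
  exact_mod_cast key

end KHaux

open KHaux in
/-- Koksma–Hlawka type inequality for the root mean square error: if the discrete
Fourier coefficients of `F` satisfy `|F̂(A)| ≤ C b^{−μ(A)}` with the Dick weight `μ`,
then `sqrt(Var_σ[I_{P+σ}(F)]) ≤ C · W(P;μ)`. -/
theorem koksma_hlawka_rmse (b s n : ℕ) (hb : 2 ≤ b) [NeZero b]
    (P : AddSubgroup (Matrix (Fin s) (Fin n) (ZMod b)))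
    (F : Matrix (Fin s) (Fin n) (ZMod b) → ℝ) (C : ℝ)
    (hF : ∀ A : Matrix (Fin s) (Fin n) (ZMod b),
      ‖((1 / (Fintype.card (Matrix (Fin s) (Fin n) (ZMod b)) : ℂ)) *
            ∑ B : Matrix (Fin s) (Fin n) (ZMod b), (F B : ℂ) *
              Complex.exp (2 * Real.pi * Complex.I / b) ^
                (∑ i : Fin s, ∑ j : Fin n, (A i j).val * (B i j).val))‖
        ≤ C * (b : ℝ) ^
            (-(∑ i : Fin s, ∑ j : Fin n,
                ((j : ℕ) + 1 : ℤ) * (if A i j = 0 then 0 else 1)))) :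
    Real.sqrt
        ((1 / (Fintype.card (Matrix (Fin s) (Fin n) (ZMod b)) : ℝ)) *
          ∑ σ : Matrix (Fin s) (Fin n) (ZMod b),
            ((1 / ((Finset.univ.filter (· ∈ P)).card : ℝ)) *
                (∑ B ∈ Finset.univ.filter (· ∈ P), F (B + σ)) -
              (1 / (Fintype.card (Matrix (Fin s) (Fin n) (ZMod b)) : ℝ)) *
                ∑ B : Matrix (Fin s) (Fin n) (ZMod b), F B) ^ 2)
      ≤ C *
        Real.sqrt
          (∑ A ∈ Finset.univ.filter
              (fun A : Matrix (Fin s) (Fin n) (ZMod b) =>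
                (∀ B ∈ P,
                  Complex.exp (2 * Real.pi * Complex.I / b) ^
                    (∑ i : Fin s, ∑ j : Fin n, (A i j).val * (B i j).val) = 1) ∧ A ≠ 0),
            (b : ℝ) ^
              (-2 * ∑ i : Fin s, ∑ j : Fin n,
                ((j : ℕ) + 1 : ℤ) * (if A i j = 0 then 0 else 1))) := by
  have hC : 0 ≤ C := by
    have h0 := hF 0
    have hz : (-∑ i : Fin s, ∑ j : Fin n, ((j : ℕ) + 1 : ℤ) *
        (if (0 : Matrix (Fin s) (Fin n) (ZMod b)) i j = 0 then 0 else 1)) = 0 := by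
      simp
    rw [hz, zpow_zero, mul_one] at h0
    exact (norm_nonneg _).trans h0
  simp only [omega_pow_eq b s n] at hF ⊢
  have hvar := variance b s n P F
  rw [hvar]
  have hN : (Fintype.card (G b s n) : ℝ) ≠ 0 := by exact_mod_cast Fintype.card_ne_zero
  rw [show (1 / (Fintype.card (G b s n) : ℝ)) * ((Fintype.card (G b s n) : ℝ) *
      ∑ A ∈ Finset.univ.filter (fun A => (∀ B ∈ P, χ b s n A B = 1) ∧ A ≠ 0),
        Complex.normSq (hatF b s n F A))
    = ∑ A ∈ Finset.univ.filter (fun A => (∀ B ∈ P, χ b s n A B = 1) ∧ A ≠ 0),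
        Complex.normSq (hatF b s n F A) from by field_simp]
  have hbound : ∑ A ∈ Finset.univ.filter
        (fun A => (∀ B ∈ P, χ b s n A B = 1) ∧ A ≠ 0),
        Complex.normSq (hatF b s n F A)
      ≤ C ^ 2 * ∑ A ∈ Finset.univ.filter
          (fun A : G b s n => (∀ B ∈ P, χ b s n A B = 1) ∧ A ≠ 0),
          (b : ℝ) ^ (-2 * ∑ i : Fin s, ∑ j : Fin n,
            ((j : ℕ) + 1 : ℤ) * (if A i j = 0 then 0 else 1)) := by
    rw [Finset.mul_sum]
    refine Finset.sum_le_sum fun A _ => ?_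
    have hA := hF A
    have h1 : Complex.normSq (hatF b s n F A)
        ≤ (C * (b : ℝ) ^ (-(∑ i : Fin s, ∑ j : Fin n,
            ((j : ℕ) + 1 : ℤ) * (if A i j = 0 then 0 else 1)))) ^ 2 := by
      rw [Complex.normSq_eq_norm_sq]
      exact pow_le_pow_left₀ (norm_nonneg _) hA 2
    refine h1.trans_eq ?_
    rw [mul_pow]
    congr 1
    rw [← zpow_natCast ((b : ℝ) ^ _) 2, ← zpow_mul]
    congr 1
    ring
  calc Real.sqrt (∑ A ∈ Finset.univ.filter
        (fun A => (∀ B ∈ P, χ b s n A B = 1) ∧ A ≠ 0),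
        Complex.normSq (hatF b s n F A))
      ≤ Real.sqrt (C ^ 2 * ∑ A ∈ Finset.univ.filter
          (fun A : G b s n => (∀ B ∈ P, χ b s n A B = 1) ∧ A ≠ 0),
          (b : ℝ) ^ (-2 * ∑ i : Fin s, ∑ j : Fin n,
            ((j : ℕ) + 1 : ℤ) * (if A i j = 0 then 0 else 1))) :=
        Real.sqrt_le_sqrt hbound
    _ = _ := by rw [Real.sqrt_mul (sq_nonneg C), Real.sqrt_sq hC]
end

section
/- MacWilliams-type inversion formula for the weighted figure of merit: for a subgroup P ⊆ ℤ_b^{s×n} and real weights ν_{i,j}, one has ∑_{A ∈ P^⊥\{0}} b^{−2ν(A)} = −1 + |P|^{-1} ∑_{B ∈ P} ∏_{i,j} (1 + η(b_{i,j}) b^{−2ν_{i,j}}), where ν(A) = ∑_{i,j} ν_{i,j} δ(a_{i,j}), η(0) = b−1, and η(c) = −1 for c ≠ 0. -/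
open scoped Classical

lemma pow_mod_aux (ω : ℂ) (b : ℕ) (hω : ω ^ b = 1) (m : ℕ) : ω ^ m = ω ^ (m % b) := by
  conv_lhs => rw [← Nat.mod_add_div m b, pow_add, pow_mul, hω, one_pow, mul_one]

lemma pow_val_add (ω : ℂ) (b : ℕ) [NeZero b] (hω : ω ^ b = 1) (x y : ZMod b) :
    ω ^ (x + y).val = ω ^ x.val * ω ^ y.val := by
  rw [← pow_add, pow_mod_aux ω b hω (x.val + y.val), ZMod.val_add]

lemma pow_natCast_val (ω : ℂ) (b : ℕ) [NeZero b] (hω : ω ^ b = 1) (m : ℕ) :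
    ω ^ ((m : ZMod b)).val = ω ^ m := by
  rw [ZMod.val_natCast, ← pow_mod_aux ω b hω]

lemma sum_zmod_pow (b : ℕ) [NeZero b] (ω : ℂ) (hprim : IsPrimitiveRoot ω b) (c : ZMod b) :
    ∑ a : ZMod b, ω ^ (a.val * c.val) = if c = 0 then (b : ℂ) else 0 := by
  have hre : ∀ f : ℕ → ℂ, ∑ a : ZMod b, f a.val = ∑ k ∈ Finset.range b, f k := by
    intro f
    refine Finset.sum_nbij' (fun a => a.val) (fun k => (k : ZMod b)) ?_ ?_ ?_ ?_ ?_ <;>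
      intros <;> simp_all [ZMod.val_lt, ZMod.val_cast_of_lt, Nat.mod_eq_of_lt]
  rw [hre (fun k => ω ^ (k * c.val))]
  by_cases hc : c = 0
  · simp [hc]
  · rw [if_neg hc]
    have hζ : (ω ^ c.val) ≠ 1 := by
      intro h
      have := (hprim.pow_eq_one_iff_dvd c.val).mp h
      have h1 : 0 < c.val := by
        rcases Nat.eq_zero_or_pos c.val with h0 | h0
        · exact absurd ((ZMod.val_eq_zero c).mp h0) hc
        · exact h0
      exact absurd (Nat.le_of_dvd h1 this) (not_le.mpr (ZMod.val_lt c))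
    calc ∑ k ∈ Finset.range b, ω ^ (k * c.val) = ∑ k ∈ Finset.range b, (ω ^ c.val) ^ k := by
          simp [← pow_mul, mul_comm]
      _ = ((ω ^ c.val) ^ b - 1) / (ω ^ c.val - 1) := geom_sum_eq hζ b
      _ = 0 := by rw [← pow_mul, mul_comm c.val b, pow_mul, hprim.pow_eq_one]; simp


lemma entry_sum (b : ℕ) [NeZero b] (ω : ℂ) (hprim : IsPrimitiveRoot ω b) (c : ZMod b) (X : ℂ)
    (hsum : ∑ a : ZMod b, ω ^ (a.val * c.val) = if c = 0 then (b : ℂ) else 0) :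
    ∑ a : ZMod b, ω ^ (a.val * c.val) * (if a = 0 then 1 else X)
      = 1 + (if c = 0 then (b : ℂ) - 1 else -1) * X := by
  have h : ∀ a : ZMod b, ω ^ (a.val * c.val) * (if a = 0 then 1 else X)
      = (if a = 0 then (1 - X) else 0) + ω ^ (a.val * c.val) * X := by
    intro a
    by_cases ha : a = 0
    · simp [ha, ZMod.val_zero]
    · simp [ha]
  rw [Finset.sum_congr rfl (fun a _ => h a), Finset.sum_add_distrib, ← Finset.sum_mul, hsum]
  simp only [Finset.sum_ite_eq' Finset.univ (0 : ZMod b) (fun _ => 1 - X), Finset.mem_univ,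
    if_true]
  by_cases hc : c = 0 <;> simp [hc] <;> ring

lemma char_sum (b : ℕ) [NeZero b] (ω : ℂ) (hω : ω ^ b = 1) {s n : ℕ}
    (P : AddSubgroup (Matrix (Fin s) (Fin n) (ZMod b)))
    (A : Matrix (Fin s) (Fin n) (ZMod b)) :
    ∑ B ∈ Finset.univ.filter (· ∈ P),
        ω ^ (∑ i : Fin s, ∑ j : Fin n, (A i j).val * (B i j).val)
      = if (∀ B ∈ P, ω ^ (∑ i : Fin s, ∑ j : Fin n, (A i j).val * (B i j).val) = 1)
        then ((Finset.univ.filter (· ∈ P)).card : ℂ) else 0 := by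
  set e : Matrix (Fin s) (Fin n) (ZMod b) → ℕ :=
    fun B => ∑ i : Fin s, ∑ j : Fin n, (A i j).val * (B i j).val with he
  have key : ∀ B, ω ^ e B = ω ^ ((∑ i : Fin s, ∑ j : Fin n, A i j * B i j : ZMod b)).val := by
    intro B
    have h1 : ((e B : ℕ) : ZMod b) = ∑ i : Fin s, ∑ j : Fin n, A i j * B i j := by
      rw [he]; push_cast [ZMod.natCast_val, ZMod.cast_id]; ring
    rw [← pow_natCast_val ω b hω (e B), h1]
  have hmul : ∀ B C, ω ^ e (B + C) = ω ^ e B * ω ^ e C := by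
    intro B C
    have hE : (∑ i : Fin s, ∑ j : Fin n, A i j * (B + C) i j : ZMod b)
        = (∑ i : Fin s, ∑ j : Fin n, A i j * B i j) + ∑ i : Fin s, ∑ j : Fin n, A i j * C i j := by
      simp [Matrix.add_apply, mul_add, Finset.sum_add_distrib]
    rw [key, key, key, hE, pow_val_add ω b hω]
  by_cases hA : ∀ B ∈ P, ω ^ e B = 1
  · rw [if_pos hA, Finset.sum_congr rfl (fun B hB => hA B (Finset.mem_filter.mp hB).2)]
    simp
  · rw [if_neg hA]
    push_neg at hA
    obtain ⟨B₀, hB₀P, hB₀⟩ := hA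
    have htrans : ∑ B ∈ Finset.univ.filter (· ∈ P), ω ^ e (B₀ + B)
        = ∑ B ∈ Finset.univ.filter (· ∈ P), ω ^ e B := by
      refine Finset.sum_nbij' (fun B => B₀ + B) (fun B => -B₀ + B) ?_ ?_ ?_ ?_ ?_
      · intro B hB
        simp only [Finset.mem_filter, Finset.mem_univ, true_and] at hB ⊢
        exact P.add_mem hB₀P hB
      · intro B hB
        simp only [Finset.mem_filter, Finset.mem_univ, true_and] at hB ⊢
        exact P.add_mem (P.neg_mem hB₀P) hB
      · intro B _; simp
      · intro B _; simp
      · intro B _; rfl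
    have hz : (ω ^ e B₀ - 1) * ∑ B ∈ Finset.univ.filter (· ∈ P), ω ^ e B = 0 := by
      rw [sub_mul, one_mul, Finset.mul_sum, sub_eq_zero]
      rw [Finset.sum_congr rfl (fun B _ => (hmul B₀ B).symm)]
      exact htrans
    rcases mul_eq_zero.mp hz with h | h
    · exact absurd (sub_eq_zero.mp h) hB₀
    · exact h

lemma rpow_prod_aux (b : ℕ) (hb : 2 ≤ b) {s n : ℕ} (ν : Fin s → Fin n → ℝ)
    (A : Matrix (Fin s) (Fin n) (ZMod b)) :
    (b : ℝ) ^ (-2 * ∑ i : Fin s, ∑ j : Fin n, ν i j * (if A i j = 0 then (0:ℝ) else 1))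
      = ∏ i : Fin s, ∏ j : Fin n, (if A i j = 0 then (1:ℝ) else (b : ℝ) ^ (-2 * ν i j)) := by
  have hbpos : (0:ℝ) < b := by positivity
  have h1 : -2 * ∑ i : Fin s, ∑ j : Fin n, ν i j * (if A i j = 0 then (0:ℝ) else 1)
      = ∑ i : Fin s, ∑ j : Fin n, (-2 * ν i j) * (if A i j = 0 then (0:ℝ) else 1) := by
    rw [Finset.mul_sum]
    refine Finset.sum_congr rfl fun i _ => ?_
    rw [Finset.mul_sum]
    exact Finset.sum_congr rfl fun j _ => by ring
  rw [h1, Real.rpow_sum_of_pos hbpos]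
  refine Finset.prod_congr rfl fun i _ => ?_
  rw [Real.rpow_sum_of_pos hbpos]
  refine Finset.prod_congr rfl fun j _ => ?_
  by_cases h : A i j = 0 <;> simp [h]

lemma expand_aux (b : ℕ) [NeZero b] (ω : ℂ) {s n : ℕ} (X : Fin s → Fin n → ℂ)
    (hentry : ∀ (i : Fin s) (j : Fin n) (c : ZMod b),
      ∑ a : ZMod b, ω ^ (a.val * c.val) * (if a = 0 then 1 else X i j)
        = 1 + (if c = 0 then (b : ℂ) - 1 else -1) * X i j)
    (B : Matrix (Fin s) (Fin n) (ZMod b)) :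
    ∏ i : Fin s, ∏ j : Fin n, (1 + (if B i j = 0 then (b : ℂ) - 1 else -1) * X i j)
      = ∑ A : Matrix (Fin s) (Fin n) (ZMod b),
          ω ^ (∑ i : Fin s, ∑ j : Fin n, (A i j).val * (B i j).val) *
            ∏ i : Fin s, ∏ j : Fin n, (if A i j = 0 then 1 else X i j) := by
  have step1 : ∏ i : Fin s, ∏ j : Fin n, (1 + (if B i j = 0 then (b : ℂ) - 1 else -1) * X i j)
      = ∏ p : Fin s × Fin n, ∑ a : ZMod b,
          ω ^ (a.val * (B p.1 p.2).val) * (if a = 0 then 1 else X p.1 p.2) := by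
    rw [Fintype.prod_prod_type]
    exact Finset.prod_congr rfl fun i _ => Finset.prod_congr rfl fun j _ =>
      (hentry i j (B i j)).symm
  rw [step1, Finset.prod_univ_sum (fun _ => Finset.univ)]
  rw [Fintype.piFinset_univ]
  refine Fintype.sum_equiv (Equiv.curry (Fin s) (Fin n) (ZMod b)) _ _ fun g => ?_
  have : ∀ (i : Fin s) (j : Fin n), (Equiv.curry (Fin s) (Fin n) (ZMod b)) g i j = g (i, j) :=
    fun i j => rfl
  rw [Finset.prod_mul_distrib]
  congr 1
  · rw [Finset.prod_pow_eq_pow_sum]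
    congr 1
    rw [Fintype.sum_prod_type]
    rfl
  · rw [Fintype.prod_prod_type]
    rfl

/-- MacWilliams-type inversion formula for the weighted figure of merit:
`∑_{A ∈ P^⊥ \ {0}} b^{−2ν(A)} = −1 + |P|⁻¹ ∑_{B ∈ P} ∏_{i,j} (1 + η(b_{i,j}) b^{−2ν_{i,j}})`. -/
theorem inversion_formula_general_weight (b s n : ℕ) (hb : 2 ≤ b) [NeZero b]
    (P : AddSubgroup (Matrix (Fin s) (Fin n) (ZMod b)))
    (ν : Fin s → Fin n → ℝ) :
    (∑ A ∈ Finset.univ.filter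
        (fun A : Matrix (Fin s) (Fin n) (ZMod b) =>
          (∀ B ∈ P,
            Complex.exp (2 * Real.pi * Complex.I / b) ^
              (∑ i : Fin s, ∑ j : Fin n, (A i j).val * (B i j).val) = 1) ∧ A ≠ 0),
        (b : ℝ) ^
          (-2 * ∑ i : Fin s, ∑ j : Fin n, ν i j * (if A i j = 0 then 0 else 1)))
      = -1 + (1 / ((Finset.univ.filter (· ∈ P)).card : ℝ)) *
          ∑ B ∈ Finset.univ.filter (· ∈ P),
            ∏ i : Fin s, ∏ j : Fin n,
              (1 + (if B i j = 0 then (b : ℝ) - 1 else -1) * (b : ℝ) ^ (-2 * ν i j)) := by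
  set ω : ℂ := Complex.exp (2 * Real.pi * Complex.I / b) with hωdef
  have hprim : IsPrimitiveRoot ω b := Complex.isPrimitiveRoot_exp b (NeZero.ne b)
  have hω : ω ^ b = 1 := hprim.pow_eq_one
  set PF := Finset.univ.filter (· ∈ P) with hPF
  set cond : Matrix (Fin s) (Fin n) (ZMod b) → Prop :=
    fun A => ∀ B ∈ P, ω ^ (∑ i : Fin s, ∑ j : Fin n, (A i j).val * (B i j).val) = 1
    with hcond
  have hcard : (0 : ℝ) < (PF.card : ℝ) := by
    have : (0 : Matrix (Fin s) (Fin n) (ZMod b)) ∈ PF := by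
      simp [hPF, P.zero_mem]
    exact_mod_cast Finset.card_pos.mpr ⟨0, this⟩
  -- main complex identity
  have hmain : ∑ B ∈ PF, ∏ i : Fin s, ∏ j : Fin n,
        (1 + (if B i j = 0 then (b : ℂ) - 1 else -1) * (((b : ℝ) ^ (-2 * ν i j) : ℝ) : ℂ))
      = (PF.card : ℂ) * ∑ A ∈ Finset.univ.filter cond,
          ∏ i : Fin s, ∏ j : Fin n, (if A i j = 0 then 1 else (((b : ℝ) ^ (-2 * ν i j) : ℝ) : ℂ)) := by
    have hentry : ∀ (i : Fin s) (j : Fin n) (c : ZMod b),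
        ∑ a : ZMod b, ω ^ (a.val * c.val) * (if a = 0 then 1 else (((b : ℝ) ^ (-2 * ν i j) : ℝ) : ℂ))
          = 1 + (if c = 0 then (b : ℂ) - 1 else -1) * (((b : ℝ) ^ (-2 * ν i j) : ℝ) : ℂ) :=
      fun i j c => entry_sum b ω hprim c (((b : ℝ) ^ (-2 * ν i j) : ℝ) : ℂ) (sum_zmod_pow b ω hprim c)
    calc ∑ B ∈ PF, ∏ i : Fin s, ∏ j : Fin n,
            (1 + (if B i j = 0 then (b : ℂ) - 1 else -1) * (((b : ℝ) ^ (-2 * ν i j) : ℝ) : ℂ))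
        = ∑ B ∈ PF, ∑ A : Matrix (Fin s) (Fin n) (ZMod b),
            ω ^ (∑ i : Fin s, ∑ j : Fin n, (A i j).val * (B i j).val) *
              ∏ i : Fin s, ∏ j : Fin n, (if A i j = 0 then 1 else (((b : ℝ) ^ (-2 * ν i j) : ℝ) : ℂ)) :=
          Finset.sum_congr rfl fun B _ => expand_aux b ω (fun i j => (((b : ℝ) ^ (-2 * ν i j) : ℝ) : ℂ)) hentry B
      _ = ∑ A : Matrix (Fin s) (Fin n) (ZMod b), ∑ B ∈ PF,
            ω ^ (∑ i : Fin s, ∑ j : Fin n, (A i j).val * (B i j).val) *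
              ∏ i : Fin s, ∏ j : Fin n, (if A i j = 0 then 1 else (((b : ℝ) ^ (-2 * ν i j) : ℝ) : ℂ)) :=
          Finset.sum_comm
      _ = ∑ A : Matrix (Fin s) (Fin n) (ZMod b),
            (if cond A then ((PF.card : ℂ)) else 0) *
              ∏ i : Fin s, ∏ j : Fin n, (if A i j = 0 then 1 else (((b : ℝ) ^ (-2 * ν i j) : ℝ) : ℂ)) := by
          refine Finset.sum_congr rfl fun A _ => ?_
          rw [← Finset.sum_mul, char_sum b ω hω P A]
      _ = ∑ A ∈ Finset.univ.filter cond,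
            (PF.card : ℂ) * ∏ i : Fin s, ∏ j : Fin n, (if A i j = 0 then 1 else (((b : ℝ) ^ (-2 * ν i j) : ℝ) : ℂ)) := by
          rw [Finset.sum_filter]
          exact Finset.sum_congr rfl fun A _ => by rw [ite_mul, zero_mul]
      _ = (PF.card : ℂ) * ∑ A ∈ Finset.univ.filter cond,
            ∏ i : Fin s, ∏ j : Fin n, (if A i j = 0 then 1 else (((b : ℝ) ^ (-2 * ν i j) : ℝ) : ℂ)) :=
          (Finset.mul_sum _ _ _).symm
  -- split off A = 0
  have hzero : (0 : Matrix (Fin s) (Fin n) (ZMod b)) ∈ Finset.univ.filter cond := by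
    simp only [Finset.mem_filter, Finset.mem_univ, true_and, hcond]
    intro B _
    simp [Matrix.zero_apply]
  have herase : (Finset.univ.filter cond).erase 0
      = Finset.univ.filter (fun A => cond A ∧ A ≠ 0) := by
    ext A
    simp only [Finset.mem_erase, Finset.mem_filter, Finset.mem_univ, true_and]
    tauto
  have hsplit : ∑ A ∈ Finset.univ.filter cond,
        ∏ i : Fin s, ∏ j : Fin n, (if A i j = 0 then 1 else (((b : ℝ) ^ (-2 * ν i j) : ℝ) : ℂ))
      = 1 + ∑ A ∈ Finset.univ.filter (fun A => cond A ∧ A ≠ 0),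
          ∏ i : Fin s, ∏ j : Fin n, (if A i j = 0 then 1 else (((b : ℝ) ^ (-2 * ν i j) : ℝ) : ℂ)) := by
    rw [← Finset.add_sum_erase _ _ hzero, herase]
    congr 1
    simp [Matrix.zero_apply]
  -- cast the goal to ℂ
  rw [← Complex.ofReal_inj]
  push_cast [apply_ite Complex.ofReal]
  have hfilt : (Finset.univ.filter
      (fun A : Matrix (Fin s) (Fin n) (ZMod b) =>
        (∀ B ∈ P, ω ^ (∑ i : Fin s, ∑ j : Fin n, (A i j).val * (B i j).val) = 1) ∧ A ≠ 0))
      = Finset.univ.filter (fun A => cond A ∧ A ≠ 0) := rfl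
  rw [hmain, hsplit, hfilt]
  have hterm : ∀ A : Matrix (Fin s) (Fin n) (ZMod b),
      ((((b : ℝ) ^ (-2 * ∑ i : Fin s, ∑ j : Fin n,
          ν i j * (if A i j = 0 then (0:ℝ) else 1)) : ℝ)) : ℂ)
        = ∏ i : Fin s, ∏ j : Fin n,
            (if A i j = 0 then 1 else (((b : ℝ) ^ (-2 * ν i j) : ℝ) : ℂ)) := by
    intro A
    rw [rpow_prod_aux b hb ν A]
    push_cast [apply_ite Complex.ofReal]
    rfl
  rw [Finset.sum_congr rfl (fun A _ => hterm A)]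
  have hne : (PF.card : ℂ) ≠ 0 := by
    exact_mod_cast hcard.ne'
  field_simp
  ring
end

section
/- Computable formula for W(P;μ+h): for a subgroup P ⊆ ℤ_b^{s×n}, ∑_{A ∈ P^⊥\{0}} b^{−2(μ(A)+h(A))} = −1 + |P|^{-1} ∑_{B∈P} ∏_{i=1}^s ∏_{j=1}^n (1 + η(b_{i,j}) b^{−2(j+1)}), where μ is the Dick weight, h(A) = ∑_{i,j} δ(a_{i,j}) is the Hamming weight, η(0) = b−1 and η(c) = −1 for c ≠ 0. -/
open scoped Classical

namespace InversionAux

open Finset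

noncomputable def ω (b : ℕ) : ℂ := Complex.exp (2 * Real.pi * Complex.I / b)

lemma omega_pow_b (b : ℕ) [NeZero b] : ω b ^ b = 1 := by
  have hb : (b : ℂ) ≠ 0 := Nat.cast_ne_zero.mpr (NeZero.ne b)
  rw [ω, ← Complex.exp_nat_mul,
    show (b : ℂ) * (2 * Real.pi * Complex.I / b) = 2 * Real.pi * Complex.I by
      field_simp]
  exact Complex.exp_two_pi_mul_I

lemma omega_pow_mod (b : ℕ) [NeZero b] (m : ℕ) : ω b ^ m = ω b ^ (m % b) := by
  conv_lhs => rw [← Nat.div_add_mod m b]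
  rw [pow_add, pow_mul, omega_pow_b, one_pow, one_mul]

lemma omega_natCast_val (b : ℕ) [NeZero b] (m : ℕ) :
    ω b ^ ((m : ZMod b)).val = ω b ^ m := by
  rw [ZMod.val_natCast]
  exact (omega_pow_mod b m).symm

lemma omega_val_add (b : ℕ) [NeZero b] (x y : ZMod b) :
    ω b ^ (x + y).val = ω b ^ x.val * ω b ^ y.val := by
  rw [ZMod.val_add, ← pow_add]
  exact (omega_pow_mod b _).symm

lemma sum_omega (b : ℕ) [NeZero b] (x : ZMod b) :
    ∑ c : ZMod b, ω b ^ (c.val * x.val) = if x = 0 then (b : ℂ) else 0 := by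
  have hb0 : b ≠ 0 := NeZero.ne b
  have hre : ∑ c : ZMod b, ω b ^ (c.val * x.val)
      = ∑ k ∈ Finset.range b, (ω b ^ x.val) ^ k := by
    refine Finset.sum_nbij' (fun c => c.val) (fun k => (k : ZMod b)) ?_ ?_ ?_ ?_ ?_
    · intro c _; exact Finset.mem_range.mpr (ZMod.val_lt c)
    · intro k _; exact Finset.mem_univ _
    · intro c _
      show ((c.val : ZMod b)) = c
      rw [ZMod.natCast_val, ZMod.cast_id]
    · intro k hk; exact ZMod.val_cast_of_lt (Finset.mem_range.mp hk)
    · intro c _; rw [mul_comm, pow_mul]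
  rw [hre]
  by_cases h : x = 0
  · subst h; simp
  · rw [if_neg h]
    have hprim := Complex.isPrimitiveRoot_exp b hb0
    have hz : ω b ^ x.val ≠ 1 := by
      intro h1
      have hd : b ∣ x.val := (hprim.pow_eq_one_iff_dvd x.val).mp h1
      exact h ((ZMod.val_eq_zero _).mp (Nat.eq_zero_of_dvd_of_lt hd (ZMod.val_lt x)))
    rw [geom_sum_eq hz]
    have hpow : (ω b ^ x.val) ^ b = 1 := by
      rw [← pow_mul, mul_comm, pow_mul, omega_pow_b, one_pow]
    simp [hpow]

noncomputable def chi (b s n : ℕ) (A B : Matrix (Fin s) (Fin n) (ZMod b)) : ℂ :=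
  ω b ^ (∑ i : Fin s, ∑ j : Fin n, (A i j).val * (B i j).val)

variable (b s n : ℕ) [NeZero b]

lemma chi_eq (A B : Matrix (Fin s) (Fin n) (ZMod b)) :
    chi b s n A B = ω b ^ (∑ i : Fin s, ∑ j : Fin n, A i j * B i j : ZMod b).val := by
  have hcast : ((∑ i : Fin s, ∑ j : Fin n, (A i j).val * (B i j).val : ℕ) : ZMod b)
      = ∑ i : Fin s, ∑ j : Fin n, A i j * B i j := by
    push_cast [ZMod.natCast_val, ZMod.cast_id]
    rfl
  rw [chi, ← hcast, omega_natCast_val]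

lemma chi_add (A B C : Matrix (Fin s) (Fin n) (ZMod b)) :
    chi b s n A (B + C) = chi b s n A B * chi b s n A C := by
  have hsum : (∑ i : Fin s, ∑ j : Fin n, A i j * (B + C) i j : ZMod b)
      = (∑ i : Fin s, ∑ j : Fin n, A i j * B i j)
        + ∑ i : Fin s, ∑ j : Fin n, A i j * C i j := by
    simp [Matrix.add_apply, mul_add, Finset.sum_add_distrib]
  rw [chi_eq, chi_eq, chi_eq, hsum, omega_val_add]

lemma sum_chi (P : AddSubgroup (Matrix (Fin s) (Fin n) (ZMod b)))
    (A : Matrix (Fin s) (Fin n) (ZMod b)) (h : ¬ ∀ B ∈ P, chi b s n A B = 1) :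
    ∑ B ∈ Finset.univ.filter (· ∈ P), chi b s n A B = 0 := by
  push_neg at h
  obtain ⟨B₀, hB₀, hne⟩ := h
  set T := Finset.univ.filter (· ∈ P) with hT
  have key : ∑ B ∈ T, chi b s n A B = (∑ B ∈ T, chi b s n A B) * chi b s n A B₀ := by
    calc ∑ B ∈ T, chi b s n A B = ∑ B ∈ T, chi b s n A (B + B₀) := by
          refine Finset.sum_nbij' (fun B => B - B₀) (fun B => B + B₀) ?_ ?_ ?_ ?_ ?_
          · intro B hB
            simp only [hT, Finset.mem_filter, Finset.mem_univ, true_and] at *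
            exact P.sub_mem hB hB₀
          · intro B hB
            simp only [hT, Finset.mem_filter, Finset.mem_univ, true_and] at *
            exact P.add_mem hB hB₀
          · intro B _; simp
          · intro B _; simp
          · intro B _; simp
      _ = ∑ B ∈ T, chi b s n A B * chi b s n A B₀ := by
          refine Finset.sum_congr rfl fun B _ => ?_
          rw [chi_add]
      _ = (∑ B ∈ T, chi b s n A B) * chi b s n A B₀ := by rw [Finset.sum_mul]
  have h2 : (∑ B ∈ T, chi b s n A B) * (chi b s n A B₀ - 1) = 0 := by
    rw [mul_sub, mul_one, ← key, sub_self]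
  rcases mul_eq_zero.mp h2 with h3 | h3
  · exact h3
  · exact absurd (sub_eq_zero.mp h3) hne

set_option maxHeartbeats 1000000 in
lemma sum_prod_matrix (F : Fin s → Fin n → ZMod b → ℂ) :
    ∑ A : Matrix (Fin s) (Fin n) (ZMod b), ∏ i : Fin s, ∏ j : Fin n, F i j (A i j)
      = ∏ i : Fin s, ∏ j : Fin n, ∑ c : ZMod b, F i j c := by
  calc ∑ A : Matrix (Fin s) (Fin n) (ZMod b), ∏ i : Fin s, ∏ j : Fin n, F i j (A i j)
      = ∑ f : (Fin s → Fin n → ZMod b), ∏ i : Fin s, ∏ j : Fin n, F i j (f i j) :=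
        Fintype.sum_equiv (Matrix.of).symm _ _ (fun A => rfl)
    _ = ∏ i : Fin s, ∑ r : Fin n → ZMod b, ∏ j : Fin n, F i j (r j) :=
        (Fintype.prod_sum (κ := fun _ : Fin s => Fin n → ZMod b)
          (fun i r => ∏ j : Fin n, F i j (r j))).symm
    _ = ∏ i : Fin s, ∏ j : Fin n, ∑ c : ZMod b, F i j c :=
        Finset.prod_congr rfl fun i _ =>
          (Fintype.prod_sum (κ := fun _ : Fin n => ZMod b) (fun j c => F i j c)).symm

lemma coord_sum (x : ZMod b) (j : Fin n) :
    ∑ c : ZMod b, (if c = 0 then (1 : ℂ) else (b : ℂ) ^ (-2 * (((j : ℕ) + 1 : ℤ) + 1)))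
        * ω b ^ (c.val * x.val)
      = 1 + (if x = 0 then (b : ℂ) - 1 else -1) * (b : ℂ) ^ (-2 * (((j : ℕ) + 1 : ℤ) + 1)) := by
  set r : ℂ := (b : ℂ) ^ (-2 * (((j : ℕ) + 1 : ℤ) + 1)) with hr
  have split : ∀ c : ZMod b, (if c = 0 then (1 : ℂ) else r) * ω b ^ (c.val * x.val)
      = r * ω b ^ (c.val * x.val)
        + (if c = 0 then (1 - r) * ω b ^ (c.val * x.val) else 0) := by
    intro c; by_cases h : c = 0 <;> simp [h] <;> ring
  rw [Finset.sum_congr rfl fun c _ => split c, Finset.sum_add_distrib, ← Finset.mul_sum,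
    sum_omega, Finset.sum_ite_eq' Finset.univ (0 : ZMod b)]
  simp only [Finset.mem_univ, if_true, ZMod.val_zero, zero_mul, pow_zero, mul_one]
  by_cases h : x = 0 <;> simp [h] <;> ring

lemma zpow_sum' {ι : Type*} (t : Finset ι) (f : ι → ℤ) {x : ℂ} (hx : x ≠ 0) :
    x ^ (∑ i ∈ t, f i) = ∏ i ∈ t, x ^ f i := by
  induction t using Finset.cons_induction with
  | empty => simp
  | cons a t ha ih => rw [Finset.sum_cons, Finset.prod_cons, zpow_add₀ hx, ih]

lemma weight_eq (hb0 : (b : ℂ) ≠ 0) (A : Matrix (Fin s) (Fin n) (ZMod b)) :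
    (b : ℂ) ^ (-2 * ((∑ i : Fin s, ∑ j : Fin n,
          ((j : ℕ) + 1 : ℤ) * (if A i j = 0 then 0 else 1))
        + ∑ i : Fin s, ∑ j : Fin n, (if A i j = 0 then 0 else 1)))
      = ∏ i : Fin s, ∏ j : Fin n,
          (if A i j = 0 then (1 : ℂ) else (b : ℂ) ^ (-2 * (((j : ℕ) + 1 : ℤ) + 1))) := by
  have hexp : -2 * ((∑ i : Fin s, ∑ j : Fin n,
          ((j : ℕ) + 1 : ℤ) * (if A i j = 0 then 0 else 1))
        + ∑ i : Fin s, ∑ j : Fin n, (if A i j = 0 then 0 else 1))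
      = ∑ i : Fin s, ∑ j : Fin n,
          (-2 * (((j : ℕ) + 1 : ℤ) + 1)) * (if A i j = 0 then 0 else 1) := by
    rw [mul_add, Finset.mul_sum, Finset.mul_sum, ← Finset.sum_add_distrib]
    refine Finset.sum_congr rfl fun i _ => ?_
    rw [Finset.mul_sum, Finset.mul_sum, ← Finset.sum_add_distrib]
    refine Finset.sum_congr rfl fun j _ => ?_
    ring
  rw [hexp, zpow_sum' _ _ hb0]
  refine Finset.prod_congr rfl fun i _ => ?_
  rw [zpow_sum' _ _ hb0]
  refine Finset.prod_congr rfl fun j _ => ?_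
  by_cases h : A i j = 0 <;> simp [h]

lemma main (P : AddSubgroup (Matrix (Fin s) (Fin n) (ZMod b))) :
    ∑ A ∈ Finset.univ.filter (fun A : Matrix (Fin s) (Fin n) (ZMod b) =>
        ∀ B ∈ P, chi b s n A B = 1),
        ∏ i : Fin s, ∏ j : Fin n,
          (if A i j = 0 then (1 : ℂ) else (b : ℂ) ^ (-2 * (((j : ℕ) + 1 : ℤ) + 1)))
      = (1 / ((Finset.univ.filter (· ∈ P)).card : ℂ)) *
          ∑ B ∈ Finset.univ.filter (· ∈ P),
            ∏ i : Fin s, ∏ j : Fin n,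
              (1 + (if B i j = 0 then (b : ℂ) - 1 else -1)
                * (b : ℂ) ^ (-2 * (((j : ℕ) + 1 : ℤ) + 1))) := by
  set T := Finset.univ.filter (· ∈ P) with hT
  set w : Matrix (Fin s) (Fin n) (ZMod b) → ℂ := fun A =>
    ∏ i : Fin s, ∏ j : Fin n,
      (if A i j = 0 then (1 : ℂ) else (b : ℂ) ^ (-2 * (((j : ℕ) + 1 : ℤ) + 1))) with hw
  have hT0 : (0 : Matrix (Fin s) (Fin n) (ZMod b)) ∈ T := by
    simp [hT, P.zero_mem]
  have hTcard : ((T.card : ℂ)) ≠ 0 :=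
    Nat.cast_ne_zero.mpr (Finset.card_ne_zero_of_mem hT0)
  have step1 : ∀ B : Matrix (Fin s) (Fin n) (ZMod b),
      ∏ i : Fin s, ∏ j : Fin n,
          (1 + (if B i j = 0 then (b : ℂ) - 1 else -1)
            * (b : ℂ) ^ (-2 * (((j : ℕ) + 1 : ℤ) + 1)))
        = ∑ A : Matrix (Fin s) (Fin n) (ZMod b), w A * chi b s n A B := by
    intro B
    have hfac : ∀ A : Matrix (Fin s) (Fin n) (ZMod b),
        w A * chi b s n A B = ∏ i : Fin s, ∏ j : Fin n,
          ((if A i j = 0 then (1 : ℂ) else (b : ℂ) ^ (-2 * (((j : ℕ) + 1 : ℤ) + 1)))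
            * ω b ^ ((A i j).val * (B i j).val)) := by
      intro A
      have hchi : chi b s n A B
          = ∏ i : Fin s, ∏ j : Fin n, ω b ^ ((A i j).val * (B i j).val) := by
        rw [chi, ← Finset.prod_pow_eq_pow_sum]
        exact Finset.prod_congr rfl fun i _ => (Finset.prod_pow_eq_pow_sum _ _ _).symm
      rw [hchi, hw, ← Finset.prod_mul_distrib]
      exact Finset.prod_congr rfl fun i _ => (Finset.prod_mul_distrib).symm
    calc ∏ i : Fin s, ∏ j : Fin n,
          (1 + (if B i j = 0 then (b : ℂ) - 1 else -1)
            * (b : ℂ) ^ (-2 * (((j : ℕ) + 1 : ℤ) + 1)))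
        = ∏ i : Fin s, ∏ j : Fin n, ∑ c : ZMod b,
            (if c = 0 then (1 : ℂ) else (b : ℂ) ^ (-2 * (((j : ℕ) + 1 : ℤ) + 1)))
              * ω b ^ (c.val * (B i j).val) := by
          refine Finset.prod_congr rfl fun i _ => Finset.prod_congr rfl fun j _ => ?_
          exact (coord_sum b n (B i j) j).symm
      _ = ∑ A : Matrix (Fin s) (Fin n) (ZMod b), ∏ i : Fin s, ∏ j : Fin n,
            ((if A i j = 0 then (1 : ℂ) else (b : ℂ) ^ (-2 * (((j : ℕ) + 1 : ℤ) + 1)))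
              * ω b ^ ((A i j).val * (B i j).val)) :=
          (sum_prod_matrix b s n (fun i j c =>
            (if c = 0 then (1 : ℂ) else (b : ℂ) ^ (-2 * (((j : ℕ) + 1 : ℤ) + 1)))
              * ω b ^ (c.val * (B i j).val))).symm
      _ = ∑ A : Matrix (Fin s) (Fin n) (ZMod b), w A * chi b s n A B :=
          Finset.sum_congr rfl fun A _ => (hfac A).symm
  have hchi_sum : ∀ A : Matrix (Fin s) (Fin n) (ZMod b),
      (∑ B ∈ T, chi b s n A B)
        = if (∀ B ∈ P, chi b s n A B = 1) then (T.card : ℂ) else 0 := by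
    intro A
    by_cases h : ∀ B ∈ P, chi b s n A B = 1
    · rw [if_pos h, Finset.sum_congr rfl fun B hB => h B (by
        simpa [hT] using hB)]
      simp
    · rw [if_neg h]
      exact sum_chi b s n P A h
  symm
  calc (1 / (T.card : ℂ)) * ∑ B ∈ T,
        ∏ i : Fin s, ∏ j : Fin n,
          (1 + (if B i j = 0 then (b : ℂ) - 1 else -1)
            * (b : ℂ) ^ (-2 * (((j : ℕ) + 1 : ℤ) + 1)))
      = (1 / (T.card : ℂ)) * ∑ B ∈ T,
          ∑ A : Matrix (Fin s) (Fin n) (ZMod b), w A * chi b s n A B := by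
        rw [Finset.sum_congr rfl fun B _ => step1 B]
    _ = (1 / (T.card : ℂ)) * ∑ A : Matrix (Fin s) (Fin n) (ZMod b),
          w A * ∑ B ∈ T, chi b s n A B := by
        rw [Finset.sum_comm]
        congr 1
        exact Finset.sum_congr rfl fun A _ => (Finset.mul_sum _ _ _).symm
    _ = (1 / (T.card : ℂ)) * ∑ A ∈ Finset.univ.filter
          (fun A : Matrix (Fin s) (Fin n) (ZMod b) => ∀ B ∈ P, chi b s n A B = 1),
          w A * (T.card : ℂ) := by
        rw [Finset.sum_filter]
        congr 1
        refine Finset.sum_congr rfl fun A _ => ?_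
        rw [hchi_sum A]
        by_cases h : ∀ B ∈ P, chi b s n A B = 1 <;> simp [h]
    _ = ∑ A ∈ Finset.univ.filter
          (fun A : Matrix (Fin s) (Fin n) (ZMod b) => ∀ B ∈ P, chi b s n A B = 1),
          w A := by
        rw [← Finset.sum_mul, one_div, mul_comm _ ((T.card : ℂ)),
          inv_mul_cancel_left₀ hTcard]

end InversionAux

/-- Computable formula for `W(P;μ+h)²` where `μ` is the Dick weight and `h` the
Hamming weight. -/
theorem inversion_formula_dick_hamming_weight (b s n : ℕ) (hb : 2 ≤ b) [NeZero b]
    (P : AddSubgroup (Matrix (Fin s) (Fin n) (ZMod b))) :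
    (∑ A ∈ Finset.univ.filter
        (fun A : Matrix (Fin s) (Fin n) (ZMod b) =>
          (∀ B ∈ P,
            Complex.exp (2 * Real.pi * Complex.I / b) ^
              (∑ i : Fin s, ∑ j : Fin n, (A i j).val * (B i j).val) = 1) ∧ A ≠ 0),
        (b : ℝ) ^
          (-2 * (∑ i : Fin s, ∑ j : Fin n,
              ((j : ℕ) + 1 : ℤ) * (if A i j = 0 then 0 else 1) +
            ∑ i : Fin s, ∑ j : Fin n, (if A i j = 0 then 0 else 1))))
      = -1 + (1 / ((Finset.univ.filter (· ∈ P)).card : ℝ)) *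
          ∑ B ∈ Finset.univ.filter (· ∈ P),
            ∏ i : Fin s, ∏ j : Fin n,
              (1 + (if B i j = 0 then (b : ℝ) - 1 else -1) *
                (b : ℝ) ^ (-2 * (((j : ℕ) + 1 : ℤ) + 1))) := by
  have hb0 : (b : ℂ) ≠ 0 := Nat.cast_ne_zero.mpr (NeZero.ne b)
  apply Complex.ofReal_injective
  have hcond : ∀ A B : Matrix (Fin s) (Fin n) (ZMod b),
      (Complex.exp (2 * Real.pi * Complex.I / b) ^
        (∑ i : Fin s, ∑ j : Fin n, (A i j).val * (B i j).val) = 1)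
      ↔ InversionAux.chi b s n A B = 1 := fun A B => Iff.rfl
  -- Rewrite the LHS filter as erase 0 of the "dual group" filter
  set D := Finset.univ.filter
    (fun A : Matrix (Fin s) (Fin n) (ZMod b) =>
      ∀ B ∈ P, InversionAux.chi b s n A B = 1) with hD
  have hfilter : Finset.univ.filter
      (fun A : Matrix (Fin s) (Fin n) (ZMod b) =>
        (∀ B ∈ P,
          Complex.exp (2 * Real.pi * Complex.I / b) ^
            (∑ i : Fin s, ∑ j : Fin n, (A i j).val * (B i j).val) = 1) ∧ A ≠ 0)
      = D.erase 0 := by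
    ext A
    simp only [hD, Finset.mem_erase, Finset.mem_filter, Finset.mem_univ, true_and]
    rw [and_comm]
    rfl
  have h0D : (0 : Matrix (Fin s) (Fin n) (ZMod b)) ∈ D := by
    simp only [hD, Finset.mem_filter, Finset.mem_univ, true_and]
    intro B _
    simp [InversionAux.chi]
  have key := InversionAux.main b s n P
  -- push cast
  push_cast [Complex.ofReal_sum, Complex.ofReal_prod, Complex.ofReal_zpow, apply_ite
    (fun x : ℝ => (x : ℂ))]
  rw [hfilter, Finset.sum_erase_eq_sub h0D]
  have hterm : ∀ A ∈ D, (b : ℂ) ^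
        (-2 * (∑ i : Fin s, ∑ j : Fin n,
            ((j : ℕ) + 1 : ℤ) * (if A i j = 0 then 0 else 1) +
          ∑ i : Fin s, ∑ j : Fin n, (if A i j = 0 then 0 else 1)))
      = ∏ i : Fin s, ∏ j : Fin n,
          (if A i j = 0 then (1 : ℂ) else (b : ℂ) ^ (-2 * (((j : ℕ) + 1 : ℤ) + 1))) :=
    fun A _ => InversionAux.weight_eq b s n hb0 A
  rw [Finset.sum_congr rfl hterm, key]
  have h00 : ((b : ℂ)) ^
      (-2 * (∑ i : Fin s, ∑ j : Fin n,
          ((j : ℕ) + 1 : ℤ) * (if (0 : Matrix (Fin s) (Fin n) (ZMod b)) i j = 0 then 0 else 1) +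
        ∑ i : Fin s, ∑ j : Fin n,
          (if (0 : Matrix (Fin s) (Fin n) (ZMod b)) i j = 0 then 0 else 1))) = 1 := by
    simp [Matrix.zero_apply]
  rw [h00]
  ring
end

section
/- Complete weight enumerator MacWilliams identity: for a subgroup P ⊆ ℤ_b^{s×n} and indeterminates (substituted by complex values) x_{i,j}(c) for c ∈ ℤ_b, one has ∑_{A ∈ P^⊥} ∏_{i,j} x_{i,j}(a_{i,j}) = |P|^{-1} ∑_{B ∈ P} ∏_{i,j} ∑_{c ∈ ℤ_b} ω_b^{c·b_{i,j}} x_{i,j}(c). -/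
open scoped Classical

lemma addChar_map_sum {A M : Type*} [AddCommMonoid A] [CommMonoid M]
    {ι : Type*} (φ : AddChar A M) (t : Finset ι) (f : ι → A) :
    φ (∑ i ∈ t, f i) = ∏ i ∈ t, φ (f i) := by
  induction t using Finset.cons_induction with
  | empty => simp
  | cons a t ha ih =>
      rw [Finset.sum_cons, Finset.prod_cons, AddChar.map_add_eq_mul, ih]

/-- MacWilliams identity for the complete weight enumerator of a digital net
`P ⊆ ℤ_b^{s×n}` and its dual `P^⊥`. -/
theorem macwilliams_cwe (b s n : ℕ) (hb : 2 ≤ b) [NeZero b]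
    (P : AddSubgroup (Matrix (Fin s) (Fin n) (ZMod b)))
    (x : Fin s → Fin n → ZMod b → ℂ) :
    (∑ A ∈ Finset.univ.filter
        (fun A : Matrix (Fin s) (Fin n) (ZMod b) => ∀ B ∈ P,
          Complex.exp (2 * Real.pi * Complex.I / b) ^
            (∑ i : Fin s, ∑ j : Fin n, (A i j).val * (B i j).val) = 1),
        ∏ i : Fin s, ∏ j : Fin n, x i j (A i j))
      = (1 / ((Finset.univ.filter (· ∈ P)).card : ℂ)) *
          ∑ B ∈ Finset.univ.filter (· ∈ P),
            ∏ i : Fin s, ∏ j : Fin n,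
              ∑ c : ZMod b,
                Complex.exp (2 * Real.pi * Complex.I / b) ^ (c.val * (B i j).val) *
                  x i j c := by
  have hb0 : (b : ℂ) ≠ 0 := Nat.cast_ne_zero.2 (NeZero.ne b)
  set ω : ℂ := Complex.exp (2 * Real.pi * Complex.I / b) with hωdef
  have hωb : ω ^ b = 1 := by
    rw [hωdef, ← Complex.exp_nat_mul]
    have : (b : ℂ) * (2 * Real.pi * Complex.I / b) = 2 * Real.pi * Complex.I := by
      field_simp
    rw [this, Complex.exp_two_pi_mul_I]
  set φ : AddChar (ZMod b) ℂ := AddChar.zmodChar b hωb with hφdef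
  have hφnat : ∀ m : ℕ, φ (m : ZMod b) = ω ^ m := fun m =>
    AddChar.zmodChar_apply' hωb m
  -- the pairing
  set χ : Matrix (Fin s) (Fin n) (ZMod b) → Matrix (Fin s) (Fin n) (ZMod b) → ℂ :=
    fun A B => φ (∑ i : Fin s, ∑ j : Fin n, A i j * B i j) with hχdef
  have hkey : ∀ A B : Matrix (Fin s) (Fin n) (ZMod b),
      ω ^ (∑ i : Fin s, ∑ j : Fin n, (A i j).val * (B i j).val) = χ A B := by
    intro A B
    rw [← hφnat, hχdef]
    congr 1
    push_cast [ZMod.natCast_val, ZMod.cast_id]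
    rfl
  have hχadd : ∀ A B C : Matrix (Fin s) (Fin n) (ZMod b),
      χ A (B + C) = χ A B * χ A C := by
    intro A B C
    rw [hχdef]
    simp only [Matrix.add_apply, mul_add, Finset.sum_add_distrib]
    exact AddChar.map_add_eq_mul φ _ _
  set PF : Finset (Matrix (Fin s) (Fin n) (ZMod b)) := Finset.univ.filter (· ∈ P) with hPF
  have hmemPF : ∀ B, B ∈ PF ↔ B ∈ P := by
    intro B; simp [hPF]
  have hN0 : (PF.card : ℂ) ≠ 0 := by
    have : (0 : Matrix (Fin s) (Fin n) (ZMod b)) ∈ PF := (hmemPF 0).2 P.zero_mem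
    have hpos : 0 < PF.card := Finset.card_pos.2 ⟨0, this⟩
    exact_mod_cast hpos.ne'
  -- orthogonality
  have horth : ∀ A : Matrix (Fin s) (Fin n) (ZMod b),
      ∑ B ∈ PF, χ A B = if (∀ B ∈ P, χ A B = 1) then (PF.card : ℂ) else 0 := by
    intro A
    by_cases h : ∀ B ∈ P, χ A B = 1
    · rw [if_pos h, Finset.sum_congr rfl (fun B hB => h B ((hmemPF B).1 hB))]
      simp
    · rw [if_neg h]
      push_neg at h
      obtain ⟨B₀, hB₀P, hne⟩ := h
      have hmul : χ A B₀ * ∑ B ∈ PF, χ A B = ∑ B ∈ PF, χ A B := by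
        rw [Finset.mul_sum]
        refine Finset.sum_nbij' (fun B => B₀ + B) (fun B => -B₀ + B) ?_ ?_ ?_ ?_ ?_
        · intro B hB
          exact (hmemPF _).2 (P.add_mem hB₀P ((hmemPF B).1 hB))
        · intro B hB
          exact (hmemPF _).2 (P.add_mem (P.neg_mem hB₀P) ((hmemPF B).1 hB))
        · intro B _; exact neg_add_cancel_left B₀ B
        · intro B _; exact add_neg_cancel_left B₀ B
        · intro B _; rw [← hχadd]
      have : (χ A B₀ - 1) * ∑ B ∈ PF, χ A B = 0 := by
        rw [sub_mul, one_mul, hmul, sub_self]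
      rcases mul_eq_zero.1 this with h1 | h2
      · exact absurd (sub_eq_zero.1 h1) hne
      · exact h2
  -- expansion of the inner product of sums
  have hexp : ∀ B ∈ PF,
      (∏ i : Fin s, ∏ j : Fin n, ∑ c : ZMod b, ω ^ (c.val * (B i j).val) * x i j c)
        = ∑ A : Matrix (Fin s) (Fin n) (ZMod b),
            χ A B * ∏ i : Fin s, ∏ j : Fin n, x i j (A i j) := by
    intro B _
    have step1 : ∀ (i : Fin s) (j : Fin n) (c : ZMod b),
        ω ^ (c.val * (B i j).val) = φ (c * B i j) := by
      intro i j c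
      rw [← hφnat]
      congr 1
      push_cast [ZMod.natCast_val, ZMod.cast_id]
      ring
    calc (∏ i : Fin s, ∏ j : Fin n, ∑ c : ZMod b, ω ^ (c.val * (B i j).val) * x i j c)
        = ∏ i : Fin s, ∏ j : Fin n, ∑ c : ZMod b, φ (c * B i j) * x i j c := by
          simp only [step1]
      _ = ∏ i : Fin s, ∑ h : Fin n → ZMod b, ∏ j : Fin n, φ (h j * B i j) * x i j (h j) := by
          refine Finset.prod_congr rfl fun i _ => ?_
          exact Fintype.prod_sum (fun j c => φ (c * B i j) * x i j c)
      _ = ∑ A : Matrix (Fin s) (Fin n) (ZMod b),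
            ∏ i : Fin s, ∏ j : Fin n, φ (A i j * B i j) * x i j (A i j) :=
          Fintype.prod_sum _
      _ = ∑ A : Matrix (Fin s) (Fin n) (ZMod b),
            χ A B * ∏ i : Fin s, ∏ j : Fin n, x i j (A i j) := by
          refine Finset.sum_congr rfl fun A _ => ?_
          rw [hχdef]
          simp only [addChar_map_sum]
          rw [← Finset.prod_mul_distrib]
          refine Finset.prod_congr rfl fun i _ => ?_
          rw [← Finset.prod_mul_distrib]
  -- assemble
  rw [Finset.sum_congr rfl (fun B hB => hexp B hB), Finset.sum_comm]
  have h2 : ∀ A : Matrix (Fin s) (Fin n) (ZMod b),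
      (∑ B ∈ PF, χ A B * ∏ i : Fin s, ∏ j : Fin n, x i j (A i j))
        = (if (∀ B ∈ P, χ A B = 1) then (PF.card : ℂ) else 0) *
            ∏ i : Fin s, ∏ j : Fin n, x i j (A i j) := by
    intro A
    rw [← Finset.sum_mul, horth A]
  rw [Finset.sum_congr rfl (fun A _ => h2 A)]
  have hcond : ∀ A : Matrix (Fin s) (Fin n) (ZMod b),
      (∀ B ∈ P, ω ^ (∑ i : Fin s, ∑ j : Fin n, (A i j).val * (B i j).val) = 1)
        ↔ (∀ B ∈ P, χ A B = 1) := by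
    intro A
    constructor <;> intro h B hB <;> have := h B hB
    · rwa [hkey] at this
    · rwa [hkey]
  rw [Finset.mul_sum]
  rw [Finset.sum_filter]
  refine Finset.sum_congr rfl fun A _ => ?_
  rw [if_congr (hcond A) rfl rfl]
  split_ifs with h
  · rw [one_div, ← mul_assoc, inv_mul_cancel₀ hN0, one_mul]
  · simp
end
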